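/- Let G be a finite group, N a normal subgroup, g ∈ N, and suppose that cl_G(g) = g[g,G] and that the normal closure of g in G equals a minimal normal subgroup M of G contained in N. Then g ∈ Z(G). -/

import Mathlib

open scoped commutatorElement

/-- The subgroup `[g,G]` generated by the commutators `[g,x]`, `x ∈ G`. -/
def commSub {G : Type*} [Group G] (g : G) : Subgroup G :=
  Subgroup.closure {c | ∃ x : G, c = ⁅g, x⁆}

/-- The conjugacy class of `g` in `G`. -/
def conjClass {G : Type*} [Group G] (g : G) : Set G := {h | IsConj g h}

/-- `g` is flat in `G` if its conjugacy class is the coset `g[g,G]`. -/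
def IsFlat {G : Type*} [Group G] (g : G) : Prop :=
  conjClass g = (g * ·) '' (commSub g : Set G)

lemma commSub_normal {G : Type*} [Group G] (g : G) : (commSub g).Normal := by
  constructor
  intro n hn y
  have : y * n * y⁻¹ ∈ (commSub g).map (MulAut.conj y).toMonoidHom := by
    exact ⟨n, hn, rfl⟩
  have hmap : (commSub g).map (MulAut.conj y).toMonoidHom ≤ commSub g := by
    rw [commSub, MonoidHom.map_closure]
    apply Subgroup.closure_le _ |>.2
    rintro c ⟨c', ⟨x, rfl⟩, rfl⟩
    have hid : (MulAut.conj y).toMonoidHom ⁅g, x⁆ = ⁅g, y⁆⁻¹ * ⁅g, y * x⁆ := by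
      simp only [MulEquiv.coe_toMonoidHom, MulAut.conj_apply, commutatorElement_def]
      group
    rw [hid]
    exact mul_mem (inv_mem (Subgroup.subset_closure ⟨y, rfl⟩))
      (Subgroup.subset_closure ⟨y * x, rfl⟩)
  exact hmap this

theorem flat_min_normal_central {G : Type*} [Group G] [Fintype G]
    (N M : Subgroup G) [N.Normal] [M.Normal] (g : G) (hg : g ∈ N)
    (hflat : IsFlat g)
    (hclosure : Subgroup.normalClosure ({g} : Set G) = M)
    (hMN : M ≤ N) (hMbot : M ≠ ⊥)
    (hmin : ∀ K : Subgroup G, K.Normal → K ≤ M → K = ⊥ ∨ K = M) :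
    g ∈ Subgroup.center G := by
  have hgM : g ∈ M := hclosure ▸ Subgroup.subset_normalClosure rfl
  have hle : commSub g ≤ M := by
    rw [commSub]
    apply Subgroup.closure_le _ |>.2
    rintro c ⟨x, rfl⟩
    have h1 : x * g⁻¹ * x⁻¹ ∈ M := Subgroup.Normal.conj_mem ‹M.Normal› _ (inv_mem hgM) x
    have : g * (x * g⁻¹ * x⁻¹) ∈ M := mul_mem hgM h1
    simpa [commutatorElement_def, mul_assoc] using this
  rcases hmin (commSub g) (commSub_normal g) hle with hbot | heq
  · rw [Subgroup.mem_center_iff]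
    intro x
    have : ⁅g, x⁆ ∈ commSub g := Subgroup.subset_closure ⟨x, rfl⟩
    rw [hbot, Subgroup.mem_bot, commutatorElement_def] at this
    have := congrArg (· * (x * g)) this
    simpa [mul_assoc] using this.symm
  · exfalso
    have hginv : g⁻¹ ∈ commSub g := heq ▸ inv_mem hgM
    have h1 : (1 : G) ∈ conjClass g := by
      rw [hflat]
      exact ⟨g⁻¹, hginv, by simp⟩
    have hg1 : g = 1 := isConj_one_left.mp h1
    apply hMbot
    rw [← hclosure, hg1]
    rw [eq_bot_iff]
    apply Subgroup.normalClosure_le_normal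
    simp
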